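/- Let Ψ = (A_in, Φ, A_out) and Ψ̃ = (Ã_in, Φ̃, Ã_out) be two affine SNNs whose positive SNNs Φ=(G,W,D), Φ̃=(G,W̃,D̃) share the same network graph G of graph depth L. Suppose there exist b, B ∈ (0,∞) such that every synaptic weight of Φ and Φ̃ is ≥ b and every synaptic delay of Φ and Φ̃ is ≤ B. Set W*_out := max{‖W_out‖_F, ‖W̃_out‖_F}, W*_in := max{‖W_in‖_F, ‖W̃_in‖_F}, b*_in := max{‖b_in‖_{ℓ∞}, ‖b̃_in‖_{ℓ∞}}. Then for every x ∈ ℝ^{d_0}: ‖R(Ψ)(x) − R(Ψ̃)(x)‖_{ℓ∞} ≤ B₁ + B₂, where B₁ = d_out^{1/2} · W*_out · ( d_0^{1/2} ‖W_in − W̃_in‖_F ‖x‖_{ℓ∞} + L·(1 + 1/b²)·‖Φ − Φ̃‖_{ℓ∞} + ‖b_in − b̃_in‖_{ℓ∞} ) and B₂ = d_out^{1/2} ‖W_out − W̃_out‖_F · ( d_0^{1/2} W*_in ‖x‖_{ℓ∞} + b*_in + L·(1/b + B) ) + ‖b_out − b̃_out‖_{ℓ∞}. -/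

import Mathlib

open scoped BigOperators

noncomputable section

/-- The ReLU function. -/
def relu (t : ℝ) : ℝ := max t 0

/-- A network graph: a finite directed acyclic graph without isolated nodes. -/
structure NetworkGraph (V : Type) [Fintype V] [DecidableEq V] where
  E : Finset (V × V)
  acyclic : WellFounded (fun u v : V => (u, v) ∈ E)
  noIsolated : ∀ v : V, (∃ u, (u, v) ∈ E) ∨ (∃ u, (v, u) ∈ E)

variable {V : Type} [Fintype V] [DecidableEq V]

/-- Input nodes: nodes with no incoming edges. -/
def NetworkGraph.Vin (G : NetworkGraph V) : Set V := {v | ∀ u, (u, v) ∉ G.E}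

/-- Output nodes: nodes with no outgoing edges. -/
def NetworkGraph.Vout (G : NetworkGraph V) : Set V := {v | ∀ u, (v, u) ∉ G.E}

/-- There exists a directed path with `n` edges in `G`. -/
def NetworkGraph.HasPathLen (G : NetworkGraph V) (n : ℕ) : Prop :=
  ∃ p : Fin (n + 1) → V, ∀ i : Fin n, (p i.castSucc, p i.succ) ∈ G.E

/-- The graph depth (length of the longest directed path) of `G` equals `L`. -/
def NetworkGraph.DepthEq (G : NetworkGraph V) (L : ℕ) : Prop :=
  G.HasPathLen L ∧ ∀ n : ℕ, G.HasPathLen n → n ≤ L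

/-- The potential of node `v` at time `s`, given presynaptic spike times `t`,
weights `w` and delays `d`. -/
def potential (G : NetworkGraph V) (w d : V × V → ℝ) (t : V → ℝ) (v : V) (s : ℝ) : ℝ :=
  ∑ u ∈ Finset.univ.filter (fun u => (u, v) ∈ G.E), w (u, v) * relu (s - t u - d (u, v))

/-- `t` is a consistent assignment of spike times extending the input spike times `tin`:
on input nodes it agrees with `tin`, and at every non-input node `v` the spike time `t v`
is the minimum (which exists) of the set of times at which the potential reaches `1`. -/
def IsSpikeMap (G : NetworkGraph V) (w d : V × V → ℝ) (tin : V → ℝ) (t : V → ℝ) : Prop :=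
  (∀ v ∈ G.Vin, t v = tin v) ∧
  ∀ v : V, v ∉ G.Vin → IsLeast {s : ℝ | potential G w d t v s = 1} (t v)

open Classical in
/-- The spike-time assignment determined by the input spike times `tin` (via choice). -/
def spikeMap (G : NetworkGraph V) (w d : V × V → ℝ) (tin : V → ℝ) : V → ℝ :=
  if h : ∃ t, IsSpikeMap G w d tin t then h.choose else fun _ => 0

/-- Realization of a (positive) SNN, given enumerations of input and output nodes. -/
def snnReal (G : NetworkGraph V) (w d : V × V → ℝ) {din dout : ℕ}
    (ein : Fin din → V) (eout : Fin dout → V) (x : Fin din → ℝ) : Fin dout → ℝ :=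
  fun j => spikeMap G w d (Function.extend ein x (fun _ => 0)) (eout j)

/-- Frobenius norm of a real matrix. -/
def frobNorm {m n : ℕ} (A : Matrix (Fin m) (Fin n) ℝ) : ℝ :=
  Real.sqrt (∑ i, ∑ j, (A i j) ^ 2)

/-- Realization of an affine SNN: affine encoder, positive SNN, affine decoder. -/
def affineReal (G : NetworkGraph V) (w d : V × V → ℝ) {din dout d0 d1 : ℕ}
    (ein : Fin din → V) (eout : Fin dout → V)
    (Win : Matrix (Fin din) (Fin d0) ℝ) (bin : Fin din → ℝ)
    (Wout : Matrix (Fin d1) (Fin dout) ℝ) (bout : Fin d1 → ℝ)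
    (x : Fin d0 → ℝ) : Fin d1 → ℝ :=
  Wout.mulVec (snnReal G w d ein eout (Win.mulVec x + bin)) + bout

/-- ℓ∞ distance of the parameters (weights and delays) of two SNNs on the same graph. -/
def paramDist (G : NetworkGraph V) (w d w' d' : V × V → ℝ) : ℝ :=
  sSup ((fun e => max |w e - w' e| |d e - d' e|) '' (G.E : Set (V × V)))

/-- An affine spiking neural network with input dimension `d0` and output dimension `d1`:
a positive SNN together with enumerations of its input/output nodes and an affine
encoder/decoder pair. -/
structure AffSNN (d0 d1 : ℕ) where
  n : ℕ
  din : ℕ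
  dout : ℕ
  G : NetworkGraph (Fin n)
  w : Fin n × Fin n → ℝ
  dl : Fin n × Fin n → ℝ
  ein : Fin din → Fin n
  eout : Fin dout → Fin n
  Win : Matrix (Fin din) (Fin d0) ℝ
  bin : Fin din → ℝ
  Wout : Matrix (Fin d1) (Fin dout) ℝ
  bout : Fin d1 → ℝ
  w_pos : ∀ e ∈ G.E, 0 < w e
  dl_nonneg : ∀ e ∈ G.E, 0 ≤ dl e
  ein_inj : Function.Injective ein
  ein_range : Set.range ein = G.Vin
  eout_inj : Function.Injective eout
  eout_range : Set.range eout = G.Vout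

/-- Realization of an affine SNN. -/
def AffSNN.real {d0 d1 : ℕ} (Ψ : AffSNN d0 d1) : (Fin d0 → ℝ) → Fin d1 → ℝ :=
  affineReal Ψ.G Ψ.w Ψ.dl Ψ.ein Ψ.eout Ψ.Win Ψ.bin Ψ.Wout Ψ.bout

/-- Size of an affine SNN: the number of nonzero scalar entries of
`(W, D, W_in, W_out, b_in, b_out)`. -/
def AffSNN.size {d0 d1 : ℕ} (Ψ : AffSNN d0 d1) : ℕ :=
  {e | e ∈ Ψ.G.E ∧ Ψ.w e ≠ 0}.ncard + {e | e ∈ Ψ.G.E ∧ Ψ.dl e ≠ 0}.ncard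
    + {p : Fin Ψ.din × Fin d0 | Ψ.Win p.1 p.2 ≠ 0}.ncard
    + {p : Fin d1 × Fin Ψ.dout | Ψ.Wout p.1 p.2 ≠ 0}.ncard
    + {i : Fin Ψ.din | Ψ.bin i ≠ 0}.ncard + {i : Fin d1 | Ψ.bout i ≠ 0}.ncard

/-- All scalar weights of the affine SNN are bounded above in absolute value by `C`. -/
def AffSNN.weightsBddAbove {d0 d1 : ℕ} (Ψ : AffSNN d0 d1) (C : ℝ) : Prop :=
  (∀ e ∈ Ψ.G.E, |Ψ.w e| ≤ C) ∧ (∀ e ∈ Ψ.G.E, |Ψ.dl e| ≤ C) ∧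
  (∀ i j, |Ψ.Win i j| ≤ C) ∧ (∀ i, |Ψ.bin i| ≤ C) ∧
  (∀ i j, |Ψ.Wout i j| ≤ C) ∧ (∀ i, |Ψ.bout i| ≤ C)

/-- All synaptic weights of the affine SNN are bounded below by `c`. -/
def AffSNN.synBddBelow {d0 d1 : ℕ} (Ψ : AffSNN d0 d1) (c : ℝ) : Prop :=
  ∀ e ∈ Ψ.G.E, c ≤ Ψ.w e

/-- Clipping to the interval `[0,1]`. -/
def clip01 (y : ℝ) : ℝ := max 0 (min 1 y)

/-- The hypothesis class of `[0,1]`-clipped realizations of affine SNNs on a fixed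
network graph with parameters bounded as in `P*_SNN(G, d⃗; b, B)` (with `d1 = 1`). -/
def clippedClass (G : NetworkGraph V) {din dout : ℕ} (ein : Fin din → V) (eout : Fin dout → V)
    (b B : ℝ) (d0 : ℕ) : Set ((Fin d0 → ℝ) → ℝ) :=
  { f | ∃ (Win : Matrix (Fin din) (Fin d0) ℝ) (bin : Fin din → ℝ)
        (w dl : V × V → ℝ) (Wout : Matrix (Fin 1) (Fin dout) ℝ) (bout : Fin 1 → ℝ),
      (∀ i j, Win i j ∈ Set.Icc (-B) B) ∧ (∀ i, bin i ∈ Set.Icc (-B) B) ∧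
      (∀ e ∈ G.E, w e ∈ Set.Icc b B) ∧ (∀ e ∈ G.E, dl e ∈ Set.Icc 0 B) ∧
      (∀ i j, Wout i j ∈ Set.Icc (-B) B) ∧ (∀ i, bout i ∈ Set.Icc (-B) B) ∧
      f = fun x => clip01 (affineReal G w dl ein eout Win bin Wout bout x 0) }

/-- The Lipschitz constant `L*` from the covering-number estimate. -/
def Lstar (d0 din dout L : ℕ) (b B : ℝ) : ℝ :=
  (dout : ℝ) * (2 * Real.sqrt din * d0 * B + B * L * (1 + 1 / b ^ 2)
    + 2 * B + L * (1 / b + B)) + 1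

/-- A regular triangulation of a compact set `Ω ⊆ ℝ^{d0}`, with simplices recorded by
their vertex sets. -/
structure RegTriangulation (d0 : ℕ) (Ω : Set (Fin d0 → ℝ)) where
  nodes : Finset (Fin d0 → ℝ)
  faces : Finset (Finset (Fin d0 → ℝ))
  nodes_sub : (nodes : Set (Fin d0 → ℝ)) ⊆ Ω
  card_face : ∀ S ∈ faces, S.card = d0 + 1
  indep : ∀ S ∈ faces, AffineIndependent ℝ ((↑) : {x // x ∈ S} → (Fin d0 → ℝ))
  face_nodes : ∀ S ∈ faces,
    (nodes : Set (Fin d0 → ℝ)) ∩ convexHull ℝ (S : Set (Fin d0 → ℝ)) = (S : Set (Fin d0 → ℝ))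
  cover : Ω = ⋃ S ∈ faces, convexHull ℝ (S : Set (Fin d0 → ℝ))
  inter : ∀ S ∈ faces, ∀ S' ∈ faces,
    convexHull ℝ (S : Set (Fin d0 → ℝ)) ∩ convexHull ℝ (S' : Set (Fin d0 → ℝ))
      = convexHull ℝ ((S ∩ S' : Finset (Fin d0 → ℝ)) : Set (Fin d0 → ℝ))

/-- Euclidean distance on `ℝ^{d0}` (realized as `Fin d0 → ℝ`). -/
def eudist {d0 : ℕ} (x y : Fin d0 → ℝ) : ℝ := Real.sqrt (∑ i, (x i - y i) ^ 2)

/-- Minimal mesh size: the minimal distance between two distinct nodes of a simplex. -/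
def hmin {d0 : ℕ} {Ω : Set (Fin d0 → ℝ)} (T : RegTriangulation d0 Ω) : ℝ :=
  sInf { r | ∃ S ∈ T.faces, ∃ x ∈ S, ∃ y ∈ S, x ≠ y ∧ r = eudist x y }

/-- Maximal mesh size: the maximal distance between two nodes of a simplex. -/
def hmax {d0 : ℕ} {Ω : Set (Fin d0 → ℝ)} (T : RegTriangulation d0 Ω) : ℝ :=
  sSup { r | ∃ S ∈ T.faces, ∃ x ∈ S, ∃ y ∈ S, r = eudist x y }

/-- `f` belongs to the linear finite element space `V_T`: it is continuous on `Ω` and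
affine on each simplex of `T`. -/
def PiecewiseAffineOn {d0 : ℕ} {Ω : Set (Fin d0 → ℝ)} (T : RegTriangulation d0 Ω)
    (f : (Fin d0 → ℝ) → ℝ) : Prop :=
  ContinuousOn f Ω ∧ ∀ S ∈ T.faces, ∃ (a : Fin d0 → ℝ) (c : ℝ),
    ∀ x ∈ convexHull ℝ (S : Set (Fin d0 → ℝ)), f x = ∑ i, a i * x i + c

/-- Admissibility of a compact domain: existence of quasi-uniform triangulations. -/
def Admissible (d0 : ℕ) (Ω : Set (Fin d0 → ℝ)) : Prop :=
  ∃ C1 C2 c2 : ℝ, 0 < C1 ∧ 0 < C2 ∧ 0 < c2 ∧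
    ∀ N : ℕ, 0 < N → ∃ T : RegTriangulation d0 Ω,
      (T.faces.card : ℝ) ≤ C1 * N ∧
      c2 * (N : ℝ) ^ (-(1 : ℝ) / d0) ≤ hmin T ∧
      hmin T ≤ hmax T ∧
      hmax T ≤ C2 * (N : ℝ) ^ (-(1 : ℝ) / d0)

/-- The `W^{s,∞}(Ω)` norm (for `C^s` functions): supremum over `Ω` of the norms of the
iterated derivatives of order at most `s`. -/
def sobNorm {d0 : ℕ} (s : ℕ) (Ω : Set (Fin d0 → ℝ)) (f : (Fin d0 → ℝ) → ℝ) : ℝ :=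
  sSup { r | ∃ k ≤ s, ∃ x ∈ Ω, r = ‖iteratedFDeriv ℝ k f x‖ }

/-- The `L^∞(Ω)` norm. -/
def supNormOn {d0 : ℕ} (Ω : Set (Fin d0 → ℝ)) (f : (Fin d0 → ℝ) → ℝ) : ℝ :=
  sSup ((fun x => |f x|) '' Ω)

/-- The Barron class `Γ_K`. -/
def BarronClass (d0 : ℕ) (K : ℝ) (f : (Fin d0 → ℝ) → ℝ) : Prop :=
  MeasureTheory.LocallyIntegrable f MeasureTheory.volume ∧
  ∃ g : (Fin d0 → ℝ) → ℂ, Measurable g ∧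
    (∀ x, (f x : ℂ) = ∫ ξ, Complex.exp (Complex.I * ((∑ i, x i * ξ i : ℝ) : ℂ)) * g ξ) ∧
    (∫ ξ, eudist ξ 0 * ‖g ξ‖) ≤ K

end
noncomputable section SNNHelpers

variable {V : Type} [Fintype V] [DecidableEq V]

-- ==== helpers ====

def preds (G : NetworkGraph V) (v : V) : Finset V :=
  Finset.univ.filter (fun u => (u, v) ∈ G.E)

lemma mem_preds {G : NetworkGraph V} {v u : V} : u ∈ preds G v ↔ (u, v) ∈ G.E := by
  simp [preds]

lemma potential_eq (G : NetworkGraph V) (w d : V × V → ℝ) (t : V → ℝ) (v : V) (s : ℝ) :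
    potential G w d t v s = ∑ u ∈ preds G v, w (u, v) * relu (s - t u - d (u, v)) := rfl

lemma preds_nonempty {G : NetworkGraph V} {v : V} (hv : v ∉ G.Vin) : (preds G v).Nonempty := by
  simp only [NetworkGraph.Vin, Set.mem_setOf_eq, not_forall, not_not] at hv
  obtain ⟨u, hu⟩ := hv
  exact ⟨u, mem_preds.2 hu⟩

lemma relu_nonneg (x : ℝ) : 0 ≤ relu x := le_max_right _ _
lemma le_relu (x : ℝ) : x ≤ relu x := le_max_left _ _
lemma relu_of_nonpos {x : ℝ} (h : x ≤ 0) : relu x = 0 := max_eq_right h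
lemma relu_of_nonneg' {x : ℝ} (h : 0 ≤ x) : relu x = x := max_eq_left h
lemma relu_mono : Monotone relu := fun a b h => max_le_max h le_rfl
lemma relu_cont : Continuous relu := continuous_id.max continuous_const

lemma potential_mono {G : NetworkGraph V} {w d : V × V → ℝ} {t : V → ℝ} {v : V}
    (hw : ∀ u ∈ preds G v, 0 ≤ w (u, v)) : Monotone (potential G w d t v) := by
  intro s₁ s₂ hs
  simp only [potential_eq]
  refine Finset.sum_le_sum fun u hu => ?_
  exact mul_le_mul_of_nonneg_left (relu_mono (by linarith)) (hw u hu)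

lemma potential_cont (G : NetworkGraph V) (w d : V × V → ℝ) (t : V → ℝ) (v : V) :
    Continuous (potential G w d t v) := by
  unfold potential
  refine continuous_finset_sum _ fun u _ => Continuous.mul continuous_const ?_
  exact relu_cont.comp ((continuous_id.sub continuous_const).sub continuous_const)

lemma potential_nonneg {G : NetworkGraph V} {w d : V × V → ℝ} {t : V → ℝ} {v : V} {s : ℝ}
    (hw : ∀ u ∈ preds G v, 0 ≤ w (u, v)) : 0 ≤ potential G w d t v s := by
  rw [potential_eq]
  exact Finset.sum_nonneg fun u hu => mul_nonneg (hw u hu) (relu_nonneg _)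

lemma potential_zero {G : NetworkGraph V} {w d : V × V → ℝ} {t : V → ℝ} {v : V} {s : ℝ}
    (hs : ∀ u ∈ preds G v, s ≤ t u + d (u, v)) : potential G w d t v s = 0 := by
  rw [potential_eq]
  refine Finset.sum_eq_zero fun u hu => ?_
  rw [relu_of_nonpos (by have := hs u hu; linarith), mul_zero]

/-- If the potential reaches 1 at `s₁`, the least solution is ≤ `s₁`. -/
lemma isLeast_le_of_one_le {G : NetworkGraph V} {w d : V × V → ℝ} {t : V → ℝ} {v : V}
    (hv : v ∉ G.Vin) {b : ℝ} (hb : 0 < b) (hw : ∀ u ∈ preds G v, b ≤ w (u, v))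
    {τ s₁ : ℝ} (hl : IsLeast {s : ℝ | potential G w d t v s = 1} τ)
    (h1 : 1 ≤ potential G w d t v s₁) : τ ≤ s₁ := by
  have hw0 : ∀ u ∈ preds G v, 0 ≤ w (u, v) := fun u hu => (hb.le.trans (hw u hu))
  obtain ⟨u₀, hu₀⟩ := preds_nonempty hv
  set m : ℝ := (preds G v).inf' ⟨u₀, hu₀⟩ (fun u => t u + d (u, v)) with hm
  have hPm : potential G w d t v m = 0 :=
    potential_zero (fun u hu => Finset.inf'_le _ hu)
  have hms : m ≤ s₁ := by
    by_contra h
    push_neg at h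
    have := potential_mono (t := t) (d := d) hw0 h.le
    rw [hPm] at this
    linarith
  have : (1 : ℝ) ∈ Set.Icc (potential G w d t v m) (potential G w d t v s₁) := by
    constructor <;> [rw [hPm]; skip] <;> linarith
  obtain ⟨s, hs, hPs⟩ := intermediate_value_Icc hms ((potential_cont G w d t v).continuousOn) this
  exact (hl.2 hPs).trans hs.2

lemma isLeast_gt {G : NetworkGraph V} {w d : V × V → ℝ} {t : V → ℝ} {v : V}
    (hv : v ∉ G.Vin) {τ : ℝ} (hl : IsLeast {s : ℝ | potential G w d t v s = 1} τ)
    {m : ℝ} (hm : ∀ u ∈ preds G v, m ≤ t u + d (u, v)) : m < τ := by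
  by_contra h
  push_neg at h
  have : potential G w d t v τ = 0 :=
    potential_zero (fun u hu => h.trans (hm u hu))
  have := hl.1
  simp only [Set.mem_setOf_eq] at this
  linarith

/-- Existence of the least solution. -/
lemma exists_isLeast {G : NetworkGraph V} (w d : V × V → ℝ) (t : V → ℝ) {v : V}
    (hv : v ∉ G.Vin) {b : ℝ} (hb : 0 < b) (hw : ∀ u ∈ preds G v, b ≤ w (u, v)) :
    IsLeast {s : ℝ | potential G w d t v s = 1} (sInf {s : ℝ | potential G w d t v s = 1}) := by
  have hw0 : ∀ u ∈ preds G v, 0 ≤ w (u, v) := fun u hu => (hb.le.trans (hw u hu))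
  obtain ⟨u₀, hu₀⟩ := preds_nonempty hv
  set S := {s : ℝ | potential G w d t v s = 1} with hS
  set m : ℝ := (preds G v).inf' ⟨u₀, hu₀⟩ (fun u => t u + d (u, v)) with hm
  set M : ℝ := (preds G v).sup' ⟨u₀, hu₀⟩ (fun u => t u + d (u, v)) with hM
  have hPm : potential G w d t v m = 0 := potential_zero (fun u hu => Finset.inf'_le _ hu)
  have h1 : 1 ≤ potential G w d t v (M + 1/b) := by
    rw [potential_eq]
    have hterm : b * (1/b) ≤ w (u₀, v) * relu (M + 1/b - t u₀ - d (u₀, v)) := by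
      refine mul_le_mul (hw u₀ hu₀) ?_ (by positivity) (hw0 u₀ hu₀)
      refine le_trans ?_ (le_relu _)
      have : t u₀ + d (u₀, v) ≤ M := Finset.le_sup' (fun u => t u + d (u, v)) hu₀
      linarith
    rw [mul_one_div_cancel hb.ne'] at hterm
    exact hterm.trans (Finset.single_le_sum
      (f := fun u => w (u, v) * relu (M + 1/b - t u - d (u, v)))
      (fun u hu => mul_nonneg (hw0 u hu) (relu_nonneg _)) hu₀)
  have hmM : m ≤ M + 1/b := by
    have h1 : m ≤ t u₀ + d (u₀, v) := Finset.inf'_le _ hu₀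
    have h2 : t u₀ + d (u₀, v) ≤ M := Finset.le_sup' (fun u => t u + d (u, v)) hu₀
    have : m ≤ M := h1.trans h2
    have : 0 < 1/b := by positivity
    linarith
  have hne : S.Nonempty := by
    have : (1 : ℝ) ∈ Set.Icc (potential G w d t v m) (potential G w d t v (M + 1/b)) := by
      constructor <;> [rw [hPm]; skip] <;> linarith
    obtain ⟨s, _, hPs⟩ := intermediate_value_Icc hmM ((potential_cont G w d t v).continuousOn) this
    exact ⟨s, hPs⟩
  have hbdd : BddBelow S := by
    refine ⟨m, fun s hs => ?_⟩
    by_contra h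
    push_neg at h
    have h0 : potential G w d t v s = 0 :=
      potential_zero (fun u hu => h.le.trans (Finset.inf'_le _ hu))
    simp only [hS, Set.mem_setOf_eq] at hs
    linarith
  have hcl : IsClosed S := isClosed_eq (potential_cont G w d t v) continuous_const
  exact ⟨hcl.csInf_mem hne hbdd, fun s hs => csInf_le hbdd hs⟩



-- ==== existence of spike map ====

open Classical in
def spikeAux (G : NetworkGraph V) (w d : V × V → ℝ) (tin : V → ℝ) : V → ℝ :=
  G.acyclic.fix (fun v ih =>
    if v ∈ G.Vin then tin v else
      sInf {s : ℝ | ∑ u ∈ (preds G v).attach,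
        w (u.1, v) * relu (s - ih u.1 (mem_preds.1 u.2) - d (u.1, v)) = 1})

open Classical in
lemma spikeAux_eq (G : NetworkGraph V) (w d : V × V → ℝ) (tin : V → ℝ) (v : V) :
    spikeAux G w d tin v = if v ∈ G.Vin then tin v else
      sInf {s : ℝ | potential G w d (spikeAux G w d tin) v s = 1} := by
  conv_lhs => rw [spikeAux, WellFounded.fix_eq]
  show (if v ∈ G.Vin then tin v else sInf {s : ℝ | ∑ u ∈ (preds G v).attach,
      w (u.1, v) * relu (s - spikeAux G w d tin u.1 - d (u.1, v)) = 1}) = _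
  by_cases hv : v ∈ G.Vin
  · simp [hv]
  · rw [if_neg hv, if_neg hv]
    congr 1
    apply Set.ext
    intro s
    simp only [Set.mem_setOf_eq]
    rw [potential_eq, ← Finset.sum_attach (preds G v)
      (fun u => w (u, v) * relu (s - spikeAux G w d tin u - d (u, v)))]

lemma exists_spikeMap {G : NetworkGraph V} {w d : V × V → ℝ} (tin : V → ℝ)
    {b : ℝ} (hb : 0 < b) (hw : ∀ e ∈ G.E, b ≤ w e) :
    ∃ t, IsSpikeMap G w d tin t := by
  refine ⟨spikeAux G w d tin, fun v hv => by rw [spikeAux_eq, if_pos hv], fun v hv => ?_⟩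
  rw [spikeAux_eq, if_neg hv]
  exact exists_isLeast w d _ hv hb (fun u hu => hw _ (mem_preds.1 hu))

lemma isSpikeMap_spikeMap {G : NetworkGraph V} {w d : V × V → ℝ} (tin : V → ℝ)
    {b : ℝ} (hb : 0 < b) (hw : ∀ e ∈ G.E, b ≤ w e) :
    IsSpikeMap G w d tin (spikeMap G w d tin) := by
  have h := exists_spikeMap (G := G) (w := w) (d := d) tin hb hw
  rw [spikeMap, dif_pos h]
  exact h.choose_spec

-- ==== rank ====

def rank (G : NetworkGraph V) : V → ℕ :=
  G.acyclic.fix (C := fun _ => ℕ) (fun v ih => (preds G v).attach.sup (fun u => ih u.1 (mem_preds.1 u.2) + 1))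

lemma rank_eq (G : NetworkGraph V) (v : V) :
    rank G v = (preds G v).attach.sup (fun u => rank G u.1 + 1) := by
  rw [rank, WellFounded.fix_eq]

lemma rank_lt {G : NetworkGraph V} {u v : V} (h : (u, v) ∈ G.E) :
    rank G u + 1 ≤ rank G v := by
  rw [rank_eq G v]
  exact Finset.le_sup (f := fun u : {x // x ∈ preds G v} => rank G u.1 + 1)
    (Finset.mem_attach _ ⟨u, mem_preds.2 h⟩)

lemma exists_path_rank (G : NetworkGraph V) (v : V) :
    ∃ p : Fin (rank G v + 1) → V,
      (∀ i : Fin (rank G v), (p i.castSucc, p i.succ) ∈ G.E) ∧ p (Fin.last _) = v := by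
  induction v using WellFounded.induction G.acyclic with
  | _ v ih =>
    rcases hn : rank G v with _ | n
    · exact ⟨fun _ => v, fun i => absurd i.2 (by omega), rfl⟩
    · -- rank v = n + 1 > 0, so sup attained at some predecessor
      have hne : (preds G v).attach.Nonempty := by
        by_contra h
        rw [Finset.not_nonempty_iff_eq_empty] at h
        rw [rank_eq, h] at hn
        simp at hn
      obtain ⟨u, _, hu⟩ := Finset.exists_mem_eq_sup _ hne (fun u => rank G u.1 + 1)
      have hrv : rank G v = rank G u.1 + 1 := by rw [rank_eq, hu]
      have hedge : (u.1, v) ∈ G.E := mem_preds.1 u.2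
      obtain ⟨q, hq, hql⟩ := ih u.1 hedge
      have hru : rank G u.1 = n := by omega
      subst hru
      refine ⟨Fin.snoc q v, fun i => ?_, by simp⟩
      induction i using Fin.lastCases with
      | last =>
        simpa [Fin.snoc_castSucc, Fin.snoc_last, Fin.succ_last, hql] using hedge
      | cast j =>
        rw [Fin.succ_castSucc, Fin.snoc_castSucc, Fin.snoc_castSucc]
        exact hq j

lemma rankG_le {G : NetworkGraph V} {L : ℕ} (hL : G.DepthEq L) (v : V) : rank G v ≤ L := by
  obtain ⟨p, hp, -⟩ := exists_path_rank G v
  exact hL.2 _ ⟨p, hp⟩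

/-- One-sided stability step at a single node. -/
lemma step_le {G : NetworkGraph V} {w d w' d' : V × V → ℝ} {t t' : V → ℝ} {v : V}
    (hv : v ∉ G.Vin) {b δ : ℝ} (hb : 0 < b) (hδ : 0 ≤ δ)
    (hw : ∀ u ∈ preds G v, b ≤ w (u, v)) (hw' : ∀ u ∈ preds G v, b ≤ w' (u, v))
    (hwd : ∀ u ∈ preds G v, |w (u, v) - w' (u, v)| ≤ δ)
    (hdd : ∀ u ∈ preds G v, |d (u, v) - d' (u, v)| ≤ δ)
    {η : V → ℝ} (hη : ∀ u ∈ preds G v, t u ≤ t' u + η u)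
    (hην : ∀ u ∈ preds G v, η u + δ + δ / b ^ 2 ≤ η v)
    (hl : IsLeast {s : ℝ | potential G w d t v s = 1} (t v))
    (hl' : potential G w' d' t' v (t' v) = 1) :
    t v ≤ t' v + η v := by
  refine isLeast_le_of_one_le hv hb hw hl ?_
  rw [potential_eq] at hl' ⊢
  rw [← hl']
  refine Finset.sum_le_sum fun u hu => ?_
  set a : ℝ := t' v - t' u - d' (u, v) with ha
  have harg : a + δ / b ^ 2 ≤ t' v + η v - t u - d (u, v) := by
    have h1 := hη u hu
    have h2 : d (u, v) ≤ d' (u, v) + δ := by have := abs_le.1 (hdd u hu); linarith [this.1]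
    have h3 := hην u hu
    simp only [ha]
    linarith
  by_cases hcase : a ≤ 0
  · calc w' (u, v) * relu a = 0 := by rw [relu_of_nonpos hcase, mul_zero]
    _ ≤ w (u, v) * relu (t' v + η v - t u - d (u, v)) :=
      mul_nonneg (hb.le.trans (hw u hu)) (relu_nonneg _)
  · push_neg at hcase
    -- a ≤ 1/b since w' a ≤ 1 = total sum
    have hsum : w' (u, v) * relu a ≤ 1 := by
      rw [← hl']
      exact Finset.single_le_sum
        (f := fun u => w' (u, v) * relu (t' v - t' u - d' (u, v)))
        (fun x hx => mul_nonneg (hb.le.trans (hw' x hx)) (relu_nonneg _)) hu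
    rw [relu_of_nonneg' hcase.le] at hsum
    have hab : a ≤ 1 / b := by
      rw [le_div_iff₀ hb]
      calc a * b ≤ a * w' (u, v) := by
            exact mul_le_mul_of_nonneg_left (hw' u hu) hcase.le
        _ = w' (u, v) * a := mul_comm _ _
        _ ≤ 1 := hsum
    have hrelu : a + δ / b ^ 2 ≤ relu (t' v + η v - t u - d (u, v)) :=
      harg.trans (le_relu _)
    clear_value a
    have hwge : w' (u, v) - δ ≤ w (u, v) := by have := abs_le.1 (hwd u hu); linarith [this.2]
    have hwb : b ≤ w (u, v) := hw u hu
    calc w' (u, v) * relu a = w' (u, v) * a := by rw [relu_of_nonneg' hcase.le]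
      _ ≤ w (u, v) * a + w (u, v) * (δ / b ^ 2) := by
          have h1 : w' (u, v) * a ≤ w (u, v) * a + δ * a := by nlinarith [hwge, hcase.le]
          have h2 : δ / b ≤ w (u, v) * (δ / b ^ 2) := by
            have hh : b * (δ / b ^ 2) ≤ w (u, v) * (δ / b ^ 2) :=
              mul_le_mul_of_nonneg_right hwb (by positivity)
            have he : δ / b = b * (δ / b ^ 2) := by field_simp
            linarith
          have h3 : δ * a ≤ δ / b := by
            have := mul_le_mul_of_nonneg_left hab hδ
            have he : δ * (1 / b) = δ / b := by ring
            linarith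
          linarith
      _ = w (u, v) * (a + δ / b ^ 2) := by ring
      _ ≤ w (u, v) * relu (t' v + η v - t u - d (u, v)) :=
          mul_le_mul_of_nonneg_left hrelu (hb.le.trans hwb)

/-- Least solution is at most any common upper bound of `t u + d` plus `1/b`. -/
lemma isLeast_le_sup {G : NetworkGraph V} {w d : V × V → ℝ} {t : V → ℝ} {v : V}
    (hv : v ∉ G.Vin) {b : ℝ} (hb : 0 < b) (hw : ∀ u ∈ preds G v, b ≤ w (u, v))
    {τ : ℝ} (hl : IsLeast {s : ℝ | potential G w d t v s = 1} τ)
    {s₀ : ℝ} (hs₀ : ∀ u ∈ preds G v, t u + d (u, v) ≤ s₀) : τ ≤ s₀ + 1 / b := by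
  refine isLeast_le_of_one_le hv hb hw hl ?_
  obtain ⟨u₀, hu₀⟩ := preds_nonempty hv
  rw [potential_eq]
  have hterm : b * (1 / b) ≤ w (u₀, v) * relu (s₀ + 1 / b - t u₀ - d (u₀, v)) := by
    refine mul_le_mul (hw u₀ hu₀) ?_ (by positivity) (hb.le.trans (hw u₀ hu₀))
    refine le_trans ?_ (le_relu _)
    have := hs₀ u₀ hu₀
    linarith
  rw [mul_one_div_cancel hb.ne'] at hterm
  exact hterm.trans (Finset.single_le_sum
    (f := fun u => w (u, v) * relu (s₀ + 1 / b - t u - d (u, v)))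
    (fun u hu => mul_nonneg (hb.le.trans (hw u hu)) (relu_nonneg _)) hu₀)

/-- Bound on spike times. -/
lemma spike_bound {G : NetworkGraph V} {w d : V × V → ℝ} {tin t : V → ℝ}
    {b B M : ℝ} (hb : 0 < b) (hB : 0 ≤ B)
    (hw : ∀ e ∈ G.E, b ≤ w e) (hd0 : ∀ e ∈ G.E, 0 ≤ d e) (hdB : ∀ e ∈ G.E, d e ≤ B)
    (hM : ∀ v ∈ G.Vin, |tin v| ≤ M)
    (ht : IsSpikeMap G w d tin t) :
    ∀ v, |t v| ≤ M + rank G v * (1 / b + B) := by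
  intro v
  induction v using WellFounded.induction G.acyclic with
  | _ v ih =>
  have hc : (0:ℝ) ≤ 1 / b + B := by positivity
  by_cases hv : v ∈ G.Vin
  · have h1 := ht.1 v hv
    have h2 := hM v hv
    have : (0:ℝ) ≤ (rank G v : ℝ) * (1 / b + B) := by positivity
    rw [h1]
    linarith
  · have hl := ht.2 v hv
    have hwp : ∀ u ∈ preds G v, b ≤ w (u, v) := fun u hu => hw _ (mem_preds.1 hu)
    have hrk : ∀ u ∈ preds G v, (rank G u : ℝ) + 1 ≤ (rank G v : ℝ) := by
      intro u hu
      exact_mod_cast rank_lt (mem_preds.1 hu)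
    have hub : ∀ u ∈ preds G v,
        t u + d (u, v) ≤ M + ((rank G v : ℝ) - 1) * (1 / b + B) + B := by
      intro u hu
      have h1 := (abs_le.1 (ih u (mem_preds.1 hu))).2
      have h2 := hdB _ (mem_preds.1 hu)
      have h3 : (rank G u : ℝ) * (1 / b + B) ≤ ((rank G v : ℝ) - 1) * (1 / b + B) :=
        mul_le_mul_of_nonneg_right (by have := hrk u hu; linarith) hc
      linarith
    have hupper : t v ≤ M + (rank G v : ℝ) * (1 / b + B) := by
      have := isLeast_le_sup hv hb hwp hl hub
      have hr1 : (1:ℝ) ≤ (rank G v : ℝ) := by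
        obtain ⟨u₀, hu₀⟩ := preds_nonempty hv
        have := hrk u₀ hu₀
        have : (0:ℝ) ≤ (rank G u₀ : ℝ) := Nat.cast_nonneg _
        linarith [hrk u₀ hu₀]
      nlinarith [this]
    have hlower : -(M + (rank G v : ℝ) * (1 / b + B)) ≤ t v := by
      have hlb : ∀ u ∈ preds G v,
          -(M + ((rank G v : ℝ) - 1) * (1 / b + B)) ≤ t u + d (u, v) := by
        intro u hu
        have h1 := (abs_le.1 (ih u (mem_preds.1 hu))).1
        have h2 := hd0 _ (mem_preds.1 hu)
        have h3 : (rank G u : ℝ) * (1 / b + B) ≤ ((rank G v : ℝ) - 1) * (1 / b + B) :=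
          mul_le_mul_of_nonneg_right (by have := hrk u hu; linarith) hc
        linarith
      have := isLeast_gt hv hl hlb
      nlinarith [this]
    exact abs_le.2 ⟨hlower, hupper⟩

/-- Stability of spike times. -/
lemma spike_stab {G : NetworkGraph V} {w d w' d' : V × V → ℝ} {tin tin' t t' : V → ℝ}
    {b δ ε : ℝ} (hb : 0 < b) (hδ : 0 ≤ δ) (hε : 0 ≤ ε)
    (hw : ∀ e ∈ G.E, b ≤ w e) (hw' : ∀ e ∈ G.E, b ≤ w' e)
    (hwd : ∀ e ∈ G.E, |w e - w' e| ≤ δ) (hdd : ∀ e ∈ G.E, |d e - d' e| ≤ δ)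
    (hin : ∀ v ∈ G.Vin, |tin v - tin' v| ≤ ε)
    (ht : IsSpikeMap G w d tin t) (ht' : IsSpikeMap G w' d' tin' t') :
    ∀ v, |t v - t' v| ≤ ε + rank G v * ((1 + 1 / b ^ 2) * δ) := by
  intro v
  induction v using WellFounded.induction G.acyclic with
  | _ v ih =>
  have hc : (0:ℝ) ≤ (1 + 1 / b ^ 2) * δ := by positivity
  by_cases hv : v ∈ G.Vin
  · rw [ht.1 v hv, ht'.1 v hv]
    have : (0:ℝ) ≤ (rank G v : ℝ) * ((1 + 1 / b ^ 2) * δ) := by positivity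
    have := hin v hv
    linarith
  · have hwp : ∀ u ∈ preds G v, b ≤ w (u, v) := fun u hu => hw _ (mem_preds.1 hu)
    have hwp' : ∀ u ∈ preds G v, b ≤ w' (u, v) := fun u hu => hw' _ (mem_preds.1 hu)
    have hην : ∀ u ∈ preds G v,
        (ε + rank G u * ((1 + 1 / b ^ 2) * δ)) + δ + δ / b ^ 2
          ≤ ε + rank G v * ((1 + 1 / b ^ 2) * δ) := by
      intro u hu
      have hr : (rank G u : ℝ) + 1 ≤ (rank G v : ℝ) := by
        exact_mod_cast rank_lt (mem_preds.1 hu)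
      have h3 : ((rank G u : ℝ) + 1) * ((1 + 1 / b ^ 2) * δ)
          ≤ (rank G v : ℝ) * ((1 + 1 / b ^ 2) * δ) :=
        mul_le_mul_of_nonneg_right hr hc
      have he : ((rank G u : ℝ) + 1) * ((1 + 1 / b ^ 2) * δ)
          = (rank G u : ℝ) * ((1 + 1 / b ^ 2) * δ) + (δ + δ / b ^ 2) := by ring
      linarith
    have h1 : t v ≤ t' v + (ε + rank G v * ((1 + 1 / b ^ 2) * δ)) := by
      refine step_le hv hb hδ hwp hwp'
        (fun u hu => hwd _ (mem_preds.1 hu)) (fun u hu => hdd _ (mem_preds.1 hu))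
        (η := fun u => ε + rank G u * ((1 + 1 / b ^ 2) * δ))
        (fun u hu => ?_) hην (ht.2 v hv) (ht'.2 v hv).1
      have := (abs_le.1 (ih u (mem_preds.1 hu))).2
      linarith
    have h2 : t' v ≤ t v + (ε + rank G v * ((1 + 1 / b ^ 2) * δ)) := by
      refine step_le hv hb hδ hwp' hwp
        (fun u hu => by rw [abs_sub_comm]; exact hwd _ (mem_preds.1 hu))
        (fun u hu => by rw [abs_sub_comm]; exact hdd _ (mem_preds.1 hu))
        (η := fun u => ε + rank G u * ((1 + 1 / b ^ 2) * δ))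
        (fun u hu => ?_) hην (ht'.2 v hv) (ht.2 v hv).1
      have := (abs_le.1 (ih u (mem_preds.1 hu))).1
      linarith
    exact abs_le.2 ⟨by linarith, by linarith⟩

lemma frobNorm_nonneg {m n : ℕ} (A : Matrix (Fin m) (Fin n) ℝ) : 0 ≤ frobNorm A :=
  Real.sqrt_nonneg _

lemma row_abs_sum_le {m n : ℕ} (A : Matrix (Fin m) (Fin n) ℝ) (i : Fin m) :
    ∑ j, |A i j| ≤ Real.sqrt n * frobNorm A := by
  have h1 : (∑ j, |A i j|) ^ 2 ≤ (n : ℝ) * ∑ j, (A i j) ^ 2 := by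
    have := Finset.sum_mul_sq_le_sq_mul_sq Finset.univ (fun _ : Fin n => (1:ℝ))
      (fun j => |A i j|)
    simpa [sq_abs] using this
  have h2 : ∑ j, (A i j) ^ 2 ≤ ∑ i', ∑ j, (A i' j) ^ 2 :=
    Finset.single_le_sum (f := fun i' => ∑ j, (A i' j) ^ 2)
      (fun i' _ => Finset.sum_nonneg fun j _ => sq_nonneg _) (Finset.mem_univ i)
  have h3 : (∑ j, |A i j|) ^ 2 ≤ (n : ℝ) * ∑ i', ∑ j, (A i' j) ^ 2 := by
    have hn : (0:ℝ) ≤ (n : ℝ) := Nat.cast_nonneg _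
    nlinarith
  have hs : (0:ℝ) ≤ ∑ j, |A i j| := Finset.sum_nonneg fun j _ => abs_nonneg _
  have h4 : ∑ j, |A i j| ≤ Real.sqrt ((n : ℝ) * ∑ i', ∑ j, (A i' j) ^ 2) :=
    Real.le_sqrt_of_sq_le h3
  calc ∑ j, |A i j| ≤ Real.sqrt ((n : ℝ) * ∑ i', ∑ j, (A i' j) ^ 2) := h4
    _ = Real.sqrt n * frobNorm A := by
        rw [frobNorm, ← Real.sqrt_mul (Nat.cast_nonneg _)]

lemma dot_bound {m n : ℕ} (A : Matrix (Fin m) (Fin n) ℝ) (i : Fin m) (z : Fin n → ℝ)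
    {C : ℝ} (hC : 0 ≤ C) (hz : ∀ j, |z j| ≤ C) :
    |∑ j, A i j * z j| ≤ Real.sqrt n * frobNorm A * C := by
  calc |∑ j, A i j * z j| ≤ ∑ j, |A i j * z j| := Finset.abs_sum_le_sum_abs _ _
    _ = ∑ j, |A i j| * |z j| := by simp [abs_mul]
    _ ≤ ∑ j, |A i j| * C :=
        Finset.sum_le_sum fun j _ => mul_le_mul_of_nonneg_left (hz j) (abs_nonneg _)
    _ = (∑ j, |A i j|) * C := by rw [Finset.sum_mul]
    _ ≤ Real.sqrt n * frobNorm A * C :=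
        mul_le_mul_of_nonneg_right (row_abs_sum_le A i) hC

lemma paramDist_le {G : NetworkGraph V} {w d w' d' : V × V → ℝ} {e : V × V} (he : e ∈ G.E) :
    |w e - w' e| ≤ paramDist G w d w' d' ∧ |d e - d' e| ≤ paramDist G w d w' d' := by
  have hbdd : BddAbove ((fun e => max |w e - w' e| |d e - d' e|) '' (G.E : Set (V × V))) :=
    (G.E.finite_toSet.image _).bddAbove
  have hmem : max |w e - w' e| |d e - d' e| ∈
      (fun e => max |w e - w' e| |d e - d' e|) '' (G.E : Set (V × V)) :=
    Set.mem_image_of_mem _ he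
  have h := le_csSup hbdd hmem
  exact ⟨(le_max_left _ _).trans h, (le_max_right _ _).trans h⟩

lemma paramDist_nonneg (G : NetworkGraph V) (w d w' d' : V × V → ℝ) :
    0 ≤ paramDist G w d w' d' := by
  rcases G.E.eq_empty_or_nonempty with h | ⟨e, he⟩
  · rw [paramDist, h]
    simp [Real.sSup_empty]
  · exact (abs_nonneg _).trans (paramDist_le he).1

end SNNHelpers

set_option maxHeartbeats 1000000

/-- Theorem: Lipschitz continuity of affine SNNs in their
parameters. For two affine SNNs on the same graph of depth `L`, with synaptic
weights ≥ `b` and delays ≤ `B`, for every input `x`: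
`‖R(Ψ)(x) − R(Ψ̃)(x)‖_∞ ≤ B₁ + B₂` with `B₁`, `B₂` as in the paper. -/
theorem statement4 {V : Type} [Fintype V] [DecidableEq V]
    (G : NetworkGraph V) {din dout d0 d1 : ℕ}
    (ein : Fin din → V) (eout : Fin dout → V)
    (hein : Function.Injective ein) (heinr : Set.range ein = G.Vin)
    (heout : Function.Injective eout) (heoutr : Set.range eout = G.Vout)
    (w d w' d' : V × V → ℝ)
    (Win Win' : Matrix (Fin din) (Fin d0) ℝ) (bin bin' : Fin din → ℝ)
    (Wout Wout' : Matrix (Fin d1) (Fin dout) ℝ) (bout bout' : Fin d1 → ℝ)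
    (b B : ℝ) (hb : 0 < b) (hB : 0 < B)
    (hw : ∀ e ∈ G.E, b ≤ w e) (hw' : ∀ e ∈ G.E, b ≤ w' e)
    (hdnn : ∀ e ∈ G.E, 0 ≤ d e) (hdnn' : ∀ e ∈ G.E, 0 ≤ d' e)
    (hdB : ∀ e ∈ G.E, d e ≤ B) (hdB' : ∀ e ∈ G.E, d' e ≤ B)
    (L : ℕ) (hL : G.DepthEq L)
    (x : Fin d0 → ℝ) :
    ‖affineReal G w d ein eout Win bin Wout bout x
        - affineReal G w' d' ein eout Win' bin' Wout' bout' x‖ ≤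
      (Real.sqrt dout * max (frobNorm Wout) (frobNorm Wout') *
        (Real.sqrt d0 * frobNorm (Win - Win') * ‖x‖
          + (L : ℝ) * (1 + 1 / b ^ 2) * paramDist G w d w' d'
          + ‖bin - bin'‖))
      + (Real.sqrt dout * frobNorm (Wout - Wout') *
          (Real.sqrt d0 * max (frobNorm Win) (frobNorm Win') * ‖x‖
            + max ‖bin‖ ‖bin'‖ + (L : ℝ) * (1 / b + B))
        + ‖bout - bout'‖) := by
  -- abbreviations
  set tin : V → ℝ := Function.extend ein (Win.mulVec x + bin) (fun _ => 0) with htin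
  set tin' : V → ℝ := Function.extend ein (Win'.mulVec x + bin') (fun _ => 0) with htin'
  have hsm : IsSpikeMap G w d tin (spikeMap G w d tin) := isSpikeMap_spikeMap tin hb hw
  have hsm' : IsSpikeMap G w' d' tin' (spikeMap G w' d' tin') :=
    isSpikeMap_spikeMap tin' hb hw'
  set t : V → ℝ := spikeMap G w d tin with htdef
  set t' : V → ℝ := spikeMap G w' d' tin' with htdef'
  set δ : ℝ := paramDist G w d w' d' with hδdef
  have hδ : 0 ≤ δ := paramDist_nonneg G w d w' d'
  set ε : ℝ := Real.sqrt d0 * frobNorm (Win - Win') * ‖x‖ + ‖bin - bin'‖ with hεdef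
  have hxn : 0 ≤ ‖x‖ := norm_nonneg x
  have hε : 0 ≤ ε := by
    have := frobNorm_nonneg (Win - Win')
    have := norm_nonneg (bin - bin')
    have h0 : (0:ℝ) ≤ Real.sqrt d0 := Real.sqrt_nonneg _
    have : 0 ≤ Real.sqrt d0 * frobNorm (Win - Win') * ‖x‖ := by positivity
    positivity
  -- bound on inputs differences
  have hεin : ∀ v ∈ G.Vin, |tin v - tin' v| ≤ ε := by
    intro v hv
    have : v ∈ Set.range ein := heinr ▸ hv
    obtain ⟨k, rfl⟩ := this
    rw [htin, htin', hein.extend_apply, hein.extend_apply]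
    have hd : (Win.mulVec x + bin) k - (Win'.mulVec x + bin') k
        = (∑ j, (Win - Win') k j * x j) + (bin k - bin' k) := by
      simp [Matrix.mulVec, dotProduct, Matrix.sub_apply, Finset.sum_sub_distrib, sub_mul]
      ring
    rw [hd]
    have h1 : |∑ j, (Win - Win') k j * x j| ≤ Real.sqrt d0 * frobNorm (Win - Win') * ‖x‖ :=
      dot_bound (Win - Win') k x hxn (fun j => by
        simpa [Real.norm_eq_abs] using norm_le_pi_norm x j)
    have h2 : |bin k - bin' k| ≤ ‖bin - bin'‖ := by
      simpa [Real.norm_eq_abs, Pi.sub_apply] using norm_le_pi_norm (bin - bin') k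
    calc |(∑ j, (Win - Win') k j * x j) + (bin k - bin' k)|
        ≤ |∑ j, (Win - Win') k j * x j| + |bin k - bin' k| := abs_add_le _ _
      _ ≤ ε := by rw [hεdef]; linarith
  -- bound on primed input values
  set M' : ℝ := Real.sqrt d0 * max (frobNorm Win) (frobNorm Win') * ‖x‖
      + max ‖bin‖ ‖bin'‖ with hM'def
  have hMin' : ∀ v ∈ G.Vin, |tin' v| ≤ M' := by
    intro v hv
    have : v ∈ Set.range ein := heinr ▸ hv
    obtain ⟨k, rfl⟩ := this
    rw [htin', hein.extend_apply]
    have hd : (Win'.mulVec x + bin') k = (∑ j, Win' k j * x j) + bin' k := by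
      simp [Matrix.mulVec, dotProduct]
    rw [hd]
    have h1 : |∑ j, Win' k j * x j| ≤ Real.sqrt d0 * frobNorm Win' * ‖x‖ :=
      dot_bound Win' k x hxn (fun j => by
        simpa [Real.norm_eq_abs] using norm_le_pi_norm x j)
    have h2 : |bin' k| ≤ ‖bin'‖ := by
      simpa [Real.norm_eq_abs] using norm_le_pi_norm bin' k
    have h3 : Real.sqrt d0 * frobNorm Win' * ‖x‖
        ≤ Real.sqrt d0 * max (frobNorm Win) (frobNorm Win') * ‖x‖ :=
      mul_le_mul_of_nonneg_right (mul_le_mul_of_nonneg_left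
        (le_max_right (frobNorm Win) (frobNorm Win')) (Real.sqrt_nonneg _)) hxn
    calc |(∑ j, Win' k j * x j) + bin' k| ≤ |∑ j, Win' k j * x j| + |bin' k| := abs_add_le _ _
      _ ≤ M' := by
          rw [hM'def]
          have := le_max_right ‖bin‖ ‖bin'‖
          linarith
  -- stability along the network
  have hwdle : ∀ e ∈ G.E, |w e - w' e| ≤ δ := fun e he => (paramDist_le he).1
  have hddle : ∀ e ∈ G.E, |d e - d' e| ≤ δ := fun e he => (paramDist_le he).2
  have hstab := spike_stab hb hδ hε hw hw' hwdle hddle hεin hsm hsm'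
  have hbd' := spike_bound (M := M') hb hB.le hw' hdnn' hdB' hMin' hsm'
  set C1 : ℝ := ε + (L : ℝ) * ((1 + 1 / b ^ 2) * δ) with hC1def
  set C2 : ℝ := M' + (L : ℝ) * (1 / b + B) with hC2def
  have hcδ : (0:ℝ) ≤ (1 + 1 / b ^ 2) * δ := by positivity
  have hstabL : ∀ v, |t v - t' v| ≤ C1 := by
    intro v
    refine (hstab v).trans ?_
    rw [hC1def]
    have h1 : (rank G v : ℝ) ≤ (L : ℝ) := by exact_mod_cast rankG_le hL v
    nlinarith
  have hM' : 0 ≤ M' := by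
    rcases Finset.univ.eq_empty_or_nonempty (α := Fin din) with h | ⟨k, -⟩
    · -- din = 0: M' is still nonneg by its shape
      rw [hM'def]
      have h0 : (0:ℝ) ≤ Real.sqrt d0 := Real.sqrt_nonneg _
      have h1 : 0 ≤ max (frobNorm Win) (frobNorm Win') :=
        le_trans (frobNorm_nonneg Win) (le_max_left _ _)
      have h2 : (0:ℝ) ≤ max ‖bin‖ ‖bin'‖ := le_trans (norm_nonneg _) (le_max_left _ _)
      positivity
    · rw [hM'def]
      have h0 : (0:ℝ) ≤ Real.sqrt d0 := Real.sqrt_nonneg _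
      have h1 : 0 ≤ max (frobNorm Win) (frobNorm Win') :=
        le_trans (frobNorm_nonneg Win) (le_max_left _ _)
      have h2 : (0:ℝ) ≤ max ‖bin‖ ‖bin'‖ := le_trans (norm_nonneg _) (le_max_left _ _)
      positivity
  have hC2 : 0 ≤ C2 := by
    rw [hC2def]
    have : (0:ℝ) ≤ (L : ℝ) * (1 / b + B) := by positivity
    linarith
  have hC1 : 0 ≤ C1 := by
    rw [hC1def]
    have : (0:ℝ) ≤ (L : ℝ) * ((1 + 1 / b ^ 2) * δ) := by positivity
    linarith
  have hbdL : ∀ v, |t' v| ≤ C2 := by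
    intro v
    refine (hbd' v).trans ?_
    rw [hC2def]
    have h1 : (rank G v : ℝ) ≤ (L : ℝ) := by exact_mod_cast rankG_le hL v
    have h2 : (0:ℝ) ≤ 1 / b + B := by positivity
    nlinarith
  -- assemble
  have hRHS1 : 0 ≤ Real.sqrt dout * max (frobNorm Wout) (frobNorm Wout') * C1 := by
    have h1 : 0 ≤ max (frobNorm Wout) (frobNorm Wout') :=
      le_trans (frobNorm_nonneg Wout) (le_max_left _ _)
    positivity
  have hRHS2 : 0 ≤ Real.sqrt dout * frobNorm (Wout - Wout') * C2 := by
    have := frobNorm_nonneg (Wout - Wout')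
    positivity
  have key : ∀ i : Fin d1,
      |(affineReal G w d ein eout Win bin Wout bout x
        - affineReal G w' d' ein eout Win' bin' Wout' bout' x) i|
      ≤ Real.sqrt dout * max (frobNorm Wout) (frobNorm Wout') * C1
        + Real.sqrt dout * frobNorm (Wout - Wout') * C2 + ‖bout - bout'‖ := by
    intro i
    have hz : ∀ j : Fin dout, snnReal G w d ein eout (Win.mulVec x + bin) j = t (eout j) := by
      intro j; rfl
    have hz' : ∀ j : Fin dout,
        snnReal G w' d' ein eout (Win'.mulVec x + bin') j = t' (eout j) := by
      intro j; rfl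
    have hdecomp : (affineReal G w d ein eout Win bin Wout bout x
        - affineReal G w' d' ein eout Win' bin' Wout' bout' x) i
        = (∑ j, Wout i j * (t (eout j) - t' (eout j)))
          + (∑ j, (Wout - Wout') i j * t' (eout j))
          + (bout i - bout' i) := by
      have habc : ∀ (S T c c' : ℝ), S + c - (T + c') = S - T + (c - c') := by intros; ring
      simp only [affineReal, Pi.sub_apply, Pi.add_apply, Matrix.mulVec, dotProduct,
        Matrix.sub_apply]
      rw [habc, ← Finset.sum_sub_distrib, ← Finset.sum_add_distrib]
      congr 1
      apply Finset.sum_congr rfl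
      intro j _
      rw [hz j, hz' j]
      ring
    rw [hdecomp]
    have h1 : |∑ j, Wout i j * (t (eout j) - t' (eout j))|
        ≤ Real.sqrt dout * frobNorm Wout * C1 :=
      dot_bound Wout i _ hC1 (fun j => hstabL (eout j))
    have h1' : Real.sqrt dout * frobNorm Wout * C1
        ≤ Real.sqrt dout * max (frobNorm Wout) (frobNorm Wout') * C1 :=
      mul_le_mul_of_nonneg_right (mul_le_mul_of_nonneg_left
        (le_max_left (frobNorm Wout) (frobNorm Wout')) (Real.sqrt_nonneg _)) hC1
    have h2 : |∑ j, (Wout - Wout') i j * t' (eout j)|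
        ≤ Real.sqrt dout * frobNorm (Wout - Wout') * C2 :=
      dot_bound (Wout - Wout') i _ hC2 (fun j => hbdL (eout j))
    have h3 : |bout i - bout' i| ≤ ‖bout - bout'‖ := by
      simpa [Real.norm_eq_abs, Pi.sub_apply] using norm_le_pi_norm (bout - bout') i
    calc |(∑ j, Wout i j * (t (eout j) - t' (eout j)))
          + (∑ j, (Wout - Wout') i j * t' (eout j)) + (bout i - bout' i)|
        ≤ |(∑ j, Wout i j * (t (eout j) - t' (eout j)))
          + (∑ j, (Wout - Wout') i j * t' (eout j))| + |bout i - bout' i| := abs_add_le _ _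
      _ ≤ |∑ j, Wout i j * (t (eout j) - t' (eout j))|
          + |∑ j, (Wout - Wout') i j * t' (eout j)| + |bout i - bout' i| := by
            have := abs_add_le (∑ j, Wout i j * (t (eout j) - t' (eout j)))
              (∑ j, (Wout - Wout') i j * t' (eout j))
            linarith
      _ ≤ _ := by linarith
  have hfinal : ‖affineReal G w d ein eout Win bin Wout bout x
        - affineReal G w' d' ein eout Win' bin' Wout' bout' x‖
      ≤ Real.sqrt dout * max (frobNorm Wout) (frobNorm Wout') * C1
        + Real.sqrt dout * frobNorm (Wout - Wout') * C2 + ‖bout - bout'‖ := by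
    refine pi_norm_le_iff_of_nonneg (by have := norm_nonneg (bout - bout'); linarith)
      |>.2 (fun i => ?_)
    simpa [Real.norm_eq_abs] using key i
  refine hfinal.trans ?_
  rw [hC1def, hC2def, hεdef, hM'def]
  ring_nf
  nlinarith [hδ]
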